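/- Abstract stability of the virtual element bilinear form: let E be a real inner product space, K a complete subspace of E, and Π the orthogonal projection of E onto K. Let c₀, c₁ > 0 and let S : E × E → ℝ be a bilinear form satisfying c₀ · ‖u − Πu‖² ≤ S(u − Πu, u − Πu) ≤ c₁ · ‖u − Πu‖² for all u ∈ E. Define a_h(u, v) := ⟪Πu, Πv⟫ + S(u − Πu, v − Πv). Then for every u ∈ E, min(1, c₀) · ‖u‖² ≤ a_h(u, u) ≤ max(1, c₁) · ‖u‖². (This is the VEM stability property: any stabilizing bilinear form that behaves like the exact energy on the kernel of the projection yields a discrete bilinear form uniformly equivalent to the exact one, with constants α_* = min(1, c₀) and α* = max(1, c₁).) -/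

import Mathlib

open RealInnerProductSpace

/-- abstract stability of the virtual element bilinear form.  With `Π`
the orthogonal projection onto a complete subspace `K` and `S` a bilinear form whose
diagonal is equivalent to the squared norm on the range of `I − Π` (with constants
`c₀, c₁ > 0`), the discrete form `a_h(u,v) = ⟪Πu, Πv⟫ + S(u−Πu, v−Πv)` satisfies
`min(1, c₀) ‖u‖² ≤ a_h(u,u) ≤ max(1, c₁) ‖u‖²`. -/
theorem vem_abstract_stability
    {E : Type*} [NormedAddCommGroup E] [InnerProductSpace ℝ E]
    (K : Submodule ℝ E) [CompleteSpace K]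
    (c₀ c₁ : ℝ) (hc₀ : 0 < c₀) (hc₁ : 0 < c₁)
    (S : E →ₗ[ℝ] E →ₗ[ℝ] ℝ)
    (hS : ∀ u : E,
      c₀ * ‖u - Submodule.orthogonalProjectionOnto K u‖ ^ 2
          ≤ S (u - Submodule.orthogonalProjectionOnto K u) (u - Submodule.orthogonalProjectionOnto K u) ∧
        S (u - Submodule.orthogonalProjectionOnto K u) (u - Submodule.orthogonalProjectionOnto K u)
          ≤ c₁ * ‖u - Submodule.orthogonalProjectionOnto K u‖ ^ 2) :
    ∀ u : E,
      min 1 c₀ * ‖u‖ ^ 2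
          ≤ ⟪(Submodule.orthogonalProjectionOnto K u : E), (Submodule.orthogonalProjectionOnto K u : E)⟫
            + S (u - Submodule.orthogonalProjectionOnto K u) (u - Submodule.orthogonalProjectionOnto K u) ∧
        ⟪(Submodule.orthogonalProjectionOnto K u : E), (Submodule.orthogonalProjectionOnto K u : E)⟫
            + S (u - Submodule.orthogonalProjectionOnto K u) (u - Submodule.orthogonalProjectionOnto K u)
          ≤ max 1 c₁ * ‖u‖ ^ 2 := by
  intro u
  have hsq : ‖u‖ ^ 2 = ‖(Submodule.orthogonalProjectionOnto K u : E)‖ ^ 2 + ‖u - Submodule.orthogonalProjectionOnto K u‖ ^ 2 :=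
    by simpa [Submodule.orthogonalProjectionOnto_orthogonal, Submodule.coe_orthogonalProjectionOnto_apply] using Submodule.norm_sq_eq_add_norm_sq_projection u K
  have hip : ⟪(Submodule.orthogonalProjectionOnto K u : E), (Submodule.orthogonalProjectionOnto K u : E)⟫ =
      ‖(Submodule.orthogonalProjectionOnto K u : E)‖ ^ 2 := real_inner_self_eq_norm_sq _
  obtain ⟨h0, h1⟩ := hS u
  have hp : (0:ℝ) ≤ ‖(Submodule.orthogonalProjectionOnto K u : E)‖ ^ 2 := by positivity
  have hw : (0:ℝ) ≤ ‖u - Submodule.orthogonalProjectionOnto K u‖ ^ 2 := by positivity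
  constructor
  · have hm1 : min 1 c₀ ≤ 1 := min_le_left _ _
    have hm2 : min 1 c₀ ≤ c₀ := min_le_right _ _
    nlinarith [mul_le_mul_of_nonneg_right hm1 hp, mul_le_mul_of_nonneg_right hm2 hw]
  · have hm1 : (1:ℝ) ≤ max 1 c₁ := le_max_left _ _
    have hm2 : c₁ ≤ max 1 c₁ := le_max_right _ _
    nlinarith [mul_le_mul_of_nonneg_right hm1 hp, mul_le_mul_of_nonneg_right hm2 hw]
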